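/- In O_q(SL_2(ℂ)), for any polynomial p ∈ ℂ[b,c] with homogeneous components p_m of total degree m, the commutator [a + d, p(b,c)] equals a·Σ_m (1 − q^{−m}) p_m(b,c) + Σ_m (q^{−m} − 1) p_m(b,c)·d. In particular, if q is not a root of unity, p(b,c) commutes with a + d if and only if p is constant. -/

import Mathlib

/-- Defining relations of `O_q(SL_2(ℂ))` on generators `a, b, c, d` (indexed by `Fin 4`):
`ab = q·ba`, `ac = q·ca`, `bd = q·db`, `cd = q·dc`, `bc = cb`,
`ad − da = (q − q⁻¹)·bc`, `ad − q·bc = 1`. -/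
inductive SL2Rel (q : ℂ) : FreeAlgebra ℂ (Fin 4) → FreeAlgebra ℂ (Fin 4) → Prop
  | ab : SL2Rel q (FreeAlgebra.ι ℂ 0 * FreeAlgebra.ι ℂ 1)
      (q • (FreeAlgebra.ι ℂ 1 * FreeAlgebra.ι ℂ 0))
  | ac : SL2Rel q (FreeAlgebra.ι ℂ 0 * FreeAlgebra.ι ℂ 2)
      (q • (FreeAlgebra.ι ℂ 2 * FreeAlgebra.ι ℂ 0))
  | bd : SL2Rel q (FreeAlgebra.ι ℂ 1 * FreeAlgebra.ι ℂ 3)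
      (q • (FreeAlgebra.ι ℂ 3 * FreeAlgebra.ι ℂ 1))
  | cd : SL2Rel q (FreeAlgebra.ι ℂ 2 * FreeAlgebra.ι ℂ 3)
      (q • (FreeAlgebra.ι ℂ 3 * FreeAlgebra.ι ℂ 2))
  | bc : SL2Rel q (FreeAlgebra.ι ℂ 1 * FreeAlgebra.ι ℂ 2)
      (FreeAlgebra.ι ℂ 2 * FreeAlgebra.ι ℂ 1)
  | ad : SL2Rel q (FreeAlgebra.ι ℂ 0 * FreeAlgebra.ι ℂ 3)
      (FreeAlgebra.ι ℂ 3 * FreeAlgebra.ι ℂ 0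
        + (q - q⁻¹) • (FreeAlgebra.ι ℂ 1 * FreeAlgebra.ι ℂ 2))
  | det : SL2Rel q (FreeAlgebra.ι ℂ 0 * FreeAlgebra.ι ℂ 3
        - q • (FreeAlgebra.ι ℂ 1 * FreeAlgebra.ι ℂ 2)) 1

/-- The quantized coordinate ring `O_q(SL_2(ℂ))`. -/
abbrev OqSL2 (q : ℂ) := RingQuot (SL2Rel q)

noncomputable def SL2a (q : ℂ) : OqSL2 q := RingQuot.mkAlgHom ℂ (SL2Rel q) (FreeAlgebra.ι ℂ 0)
noncomputable def SL2b (q : ℂ) : OqSL2 q := RingQuot.mkAlgHom ℂ (SL2Rel q) (FreeAlgebra.ι ℂ 1)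
noncomputable def SL2c (q : ℂ) : OqSL2 q := RingQuot.mkAlgHom ℂ (SL2Rel q) (FreeAlgebra.ι ℂ 2)
noncomputable def SL2d (q : ℂ) : OqSL2 q := RingQuot.mkAlgHom ℂ (SL2Rel q) (FreeAlgebra.ι ℂ 3)


/-- Evaluation of a (commutative) polynomial `p ∈ ℂ[b,c]`, given by its coefficient
function `f : (ℕ × ℕ) →₀ ℂ`, at the commuting elements `b, c` of `O_q(SL_2(ℂ))`. -/
noncomputable def SL2poly (q : ℂ) (f : (ℕ × ℕ) →₀ ℂ) : OqSL2 q :=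
  f.sum fun kl coef => coef • (SL2b q ^ kl.1 * SL2c q ^ kl.2)

section Aux

variable (q : ℂ)

private lemma oq_ab : SL2a q * SL2b q = q • (SL2b q * SL2a q) := by
  simpa only [SL2a, SL2b, map_mul, map_smul] using
    RingQuot.mkAlgHom_rel ℂ (SL2Rel.ab (q := q))

private lemma oq_ac : SL2a q * SL2c q = q • (SL2c q * SL2a q) := by
  simpa only [SL2a, SL2c, map_mul, map_smul] using
    RingQuot.mkAlgHom_rel ℂ (SL2Rel.ac (q := q))

private lemma oq_bd : SL2b q * SL2d q = q • (SL2d q * SL2b q) := by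
  simpa only [SL2b, SL2d, map_mul, map_smul] using
    RingQuot.mkAlgHom_rel ℂ (SL2Rel.bd (q := q))

private lemma oq_cd : SL2c q * SL2d q = q • (SL2d q * SL2c q) := by
  simpa only [SL2c, SL2d, map_mul, map_smul] using
    RingQuot.mkAlgHom_rel ℂ (SL2Rel.cd (q := q))

private lemma oq_db (hq0 : q ≠ 0) : SL2d q * SL2b q = q⁻¹ • (SL2b q * SL2d q) := by
  rw [oq_bd, smul_smul, inv_mul_cancel₀ hq0, one_smul]

private lemma oq_dc (hq0 : q ≠ 0) : SL2d q * SL2c q = q⁻¹ • (SL2c q * SL2d q) := by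
  rw [oq_cd, smul_smul, inv_mul_cancel₀ hq0, one_smul]

private lemma comm_pow {x y : OqSL2 q} {t : ℂ} (h : x * y = t • (y * x)) (k : ℕ) :
    x * y ^ k = t ^ k • (y ^ k * x) := by
  induction k with
  | zero => simp
  | succ n ih =>
      rw [pow_succ, ← mul_assoc, ih, smul_mul_assoc, mul_assoc, h,
        mul_smul_comm, smul_smul, ← pow_succ, ← mul_assoc, ← pow_succ]

private lemma oq_a_mono (k l : ℕ) :
    SL2a q * (SL2b q ^ k * SL2c q ^ l)
      = q ^ (k + l) • ((SL2b q ^ k * SL2c q ^ l) * SL2a q) := by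
  rw [← mul_assoc, comm_pow q (oq_ab q) k, smul_mul_assoc, mul_assoc,
    comm_pow q (oq_ac q) l, mul_smul_comm, smul_smul, ← pow_add, ← mul_assoc]

private lemma oq_d_mono (hq0 : q ≠ 0) (k l : ℕ) :
    SL2d q * (SL2b q ^ k * SL2c q ^ l)
      = (q⁻¹) ^ (k + l) • ((SL2b q ^ k * SL2c q ^ l) * SL2d q) := by
  rw [← mul_assoc, comm_pow q (oq_db q hq0) k, smul_mul_assoc, mul_assoc,
    comm_pow q (oq_dc q hq0) l, mul_smul_comm, smul_smul, ← pow_add, ← mul_assoc]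

private lemma oq_mono_a (hq0 : q ≠ 0) (k l : ℕ) :
    (SL2b q ^ k * SL2c q ^ l) * SL2a q
      = (q⁻¹) ^ (k + l) • (SL2a q * (SL2b q ^ k * SL2c q ^ l)) := by
  rw [oq_a_mono, smul_smul, inv_pow, inv_mul_cancel₀ (pow_ne_zero _ hq0), one_smul]

private lemma zq (k l : ℕ) : q ^ (-((k : ℤ) + l)) = (q⁻¹) ^ (k + l) := by
  rw [← Nat.cast_add, zpow_neg, zpow_natCast, inv_pow]

lemma SL2part1 (hq0 : q ≠ 0) (f : (ℕ × ℕ) →₀ ℂ) :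
    (SL2a q + SL2d q) * SL2poly q f - SL2poly q f * (SL2a q + SL2d q) =
      SL2a q * (f.sum fun kl coef =>
          ((1 - q ^ (-((kl.1 : ℤ) + kl.2))) * coef) • (SL2b q ^ kl.1 * SL2c q ^ kl.2))
        + (f.sum fun kl coef =>
          ((q ^ (-((kl.1 : ℤ) + kl.2)) - 1) * coef) • (SL2b q ^ kl.1 * SL2c q ^ kl.2))
          * SL2d q := by
  rw [SL2poly, Finsupp.mul_sum, Finsupp.sum_mul, ← Finsupp.sum_sub, Finsupp.mul_sum,
    Finsupp.sum_mul]
  rw [show (f.sum fun kl coef => SL2a q *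
        (((1 - q ^ (-((kl.1 : ℤ) + kl.2))) * coef) • (SL2b q ^ kl.1 * SL2c q ^ kl.2)))
      + (f.sum fun kl coef =>
        (((q ^ (-((kl.1 : ℤ) + kl.2)) - 1) * coef) • (SL2b q ^ kl.1 * SL2c q ^ kl.2)) * SL2d q)
      = f.sum fun kl coef => SL2a q *
        (((1 - q ^ (-((kl.1 : ℤ) + kl.2))) * coef) • (SL2b q ^ kl.1 * SL2c q ^ kl.2))
        + (((q ^ (-((kl.1 : ℤ) + kl.2)) - 1) * coef) • (SL2b q ^ kl.1 * SL2c q ^ kl.2)) * SL2d q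
    from (Finset.sum_add_distrib).symm]
  apply Finsupp.sum_congr
  intro kl _
  obtain ⟨k, l⟩ := kl
  simp only [zq]
  rw [add_mul, mul_add, mul_smul_comm, mul_smul_comm, smul_mul_assoc, smul_mul_assoc,
    mul_smul_comm, smul_mul_assoc, oq_d_mono q hq0 k l, oq_mono_a q hq0 k l]
  match_scalars <;> ring

end Aux

section Rep

open AddMonoidAlgebra

abbrev Wsp : Type := AddMonoidAlgebra ℂ (ℕ × ℕ)

/-- dilation `x^k y^l ↦ t^(k+l) x^k y^l` as an algebra endomorphism -/
noncomputable def dil (t : ℂ) : Wsp →ₐ[ℂ] Wsp :=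
  AddMonoidAlgebra.lift ℂ Wsp (ℕ × ℕ)
    { toFun := fun g => t ^ ((Multiplicative.toAdd g).1 + (Multiplicative.toAdd g).2) •
        AddMonoidAlgebra.single (Multiplicative.toAdd g) 1
      map_one' := by
        simp [AddMonoidAlgebra.one_def]
      map_mul' := by
        intro g h
        simp only [AddMonoidAlgebra.single_mul_single, smul_mul_assoc, mul_smul_comm,
          smul_smul, mul_one, toAdd_mul]
        rw [Prod.fst_add, Prod.snd_add]
        congr 1
        ring }

lemma dil_single (t : ℂ) (g : ℕ × ℕ) (r : ℂ) :
    dil t (AddMonoidAlgebra.single g r) = t ^ (g.1 + g.2) • AddMonoidAlgebra.single g r := by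
  rw [dil, AddMonoidAlgebra.lift_single]
  simp only [MonoidHom.coe_mk, OneHom.coe_mk, toAdd_ofAdd]
  rw [smul_comm]
  congr 1
  rw [AddMonoidAlgebra.smul_single, smul_eq_mul, mul_one]

lemma dil_dil (t : ℂ) (ht : t ≠ 0) (x : Wsp) : dil t (dil t⁻¹ x) = x := by
  have : (dil t).comp (dil t⁻¹) = AlgHom.id ℂ Wsp := by
    refine AddMonoidAlgebra.algHom_ext ?_ (Subsingleton.elim _ _)
    intro g
    simp only [AlgHom.coe_comp, Function.comp_apply, AlgHom.coe_id, id_eq]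
    rw [dil_single, map_smul, dil_single, smul_smul, ← mul_pow, inv_mul_cancel₀ ht, one_pow,
      one_smul]
  calc dil t (dil t⁻¹ x) = ((dil t).comp (dil t⁻¹)) x := rfl
  _ = x := by rw [this]; rfl

noncomputable def opA (q : ℂ) : Module.End ℂ Wsp := (dil q).toLinearMap
noncomputable def opB : Module.End ℂ Wsp :=
  LinearMap.mulLeft ℂ (AddMonoidAlgebra.single (1,0) 1)
noncomputable def opC : Module.End ℂ Wsp :=
  LinearMap.mulLeft ℂ (AddMonoidAlgebra.single (0,1) 1)
/-- the element `1 + q·x·y` -/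
noncomputable def wel (q : ℂ) : Wsp := 1 + q • AddMonoidAlgebra.single (1,1) 1
noncomputable def opD (q : ℂ) : Module.End ℂ Wsp :=
  (dil q⁻¹).toLinearMap * LinearMap.mulLeft ℂ (wel q)

lemma dil_mulLeft (t : ℂ) (p : Wsp) :
    (dil t).toLinearMap * LinearMap.mulLeft ℂ p
      = LinearMap.mulLeft ℂ (dil t p) * (dil t).toLinearMap := by
  apply LinearMap.ext
  intro x
  simp [Module.End.mul_apply, map_mul]

lemma mulLeft_smul' (t : ℂ) (p : Wsp) :
    LinearMap.mulLeft ℂ (t • p) = t • LinearMap.mulLeft ℂ p := by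
  apply LinearMap.ext; intro x; simp [smul_mul_assoc]

lemma mulLeft_add' (p p' : Wsp) :
    LinearMap.mulLeft ℂ (p + p') = LinearMap.mulLeft ℂ p + LinearMap.mulLeft ℂ p' := by
  apply LinearMap.ext; intro x; simp [add_mul]

lemma mulLeft_mul' (p p' : Wsp) :
    LinearMap.mulLeft ℂ (p * p') = LinearMap.mulLeft ℂ p * LinearMap.mulLeft ℂ p' := by
  rw [LinearMap.mulLeft_mul]; rfl

-- generator images
lemma dil_x (t : ℂ) : dil t (AddMonoidAlgebra.single ((1:ℕ),(0:ℕ)) (1:ℂ))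
    = t • AddMonoidAlgebra.single (1,0) 1 := by rw [dil_single]; norm_num
lemma dil_y (t : ℂ) : dil t (AddMonoidAlgebra.single ((0:ℕ),(1:ℕ)) (1:ℂ))
    = t • AddMonoidAlgebra.single (0,1) 1 := by rw [dil_single]; norm_num

lemma endRel_ab (q : ℂ) : opA q * opB = q • (opB * opA q) := by
  rw [opA, opB, dil_mulLeft, dil_x, mulLeft_smul', smul_mul_assoc]

lemma endRel_ac (q : ℂ) : opA q * opC = q • (opC * opA q) := by
  rw [opA, opC, dil_mulLeft, dil_y, mulLeft_smul', smul_mul_assoc]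

lemma dil_w (q : ℂ) (hq0 : q ≠ 0) :
    dil q⁻¹ (wel q) = 1 + q⁻¹ • AddMonoidAlgebra.single (1,1) 1 := by
  rw [wel, map_add, map_one, map_smul, dil_single, smul_smul]
  congr 2
  show q * q⁻¹ ^ (1 + 1) = q⁻¹
  rw [pow_two]
  field_simp

lemma endRel_bd (q : ℂ) (hq0 : q ≠ 0) : opB * opD q = q • (opD q * opB) := by
  have h1 : opB * opD q = LinearMap.mulLeft ℂ
      (AddMonoidAlgebra.single (1,0) 1 * dil q⁻¹ (wel q)) * (dil q⁻¹).toLinearMap := by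
    rw [opB, opD, dil_mulLeft, ← mul_assoc, ← mulLeft_mul']
  have h2 : opD q * opB = LinearMap.mulLeft ℂ
      (dil q⁻¹ (wel q) * (q⁻¹ • AddMonoidAlgebra.single (1,0) 1)) * (dil q⁻¹).toLinearMap := by
    rw [opD, opB, mul_assoc, ← mulLeft_mul', dil_mulLeft, map_mul, dil_x]
  rw [h1, h2, mul_smul_comm, mulLeft_smul', smul_mul_assoc, smul_smul,
    mul_inv_cancel₀ hq0, one_smul]
  congr 2
  exact mul_comm _ _

lemma endRel_cd (q : ℂ) (hq0 : q ≠ 0) : opC * opD q = q • (opD q * opC) := by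
  have h1 : opC * opD q = LinearMap.mulLeft ℂ
      (AddMonoidAlgebra.single (0,1) 1 * dil q⁻¹ (wel q)) * (dil q⁻¹).toLinearMap := by
    rw [opC, opD, dil_mulLeft, ← mul_assoc, ← mulLeft_mul']
  have h2 : opD q * opC = LinearMap.mulLeft ℂ
      (dil q⁻¹ (wel q) * (q⁻¹ • AddMonoidAlgebra.single (0,1) 1)) * (dil q⁻¹).toLinearMap := by
    rw [opD, opC, mul_assoc, ← mulLeft_mul', dil_mulLeft, map_mul, dil_y]
  rw [h1, h2, mul_smul_comm, mulLeft_smul', smul_mul_assoc, smul_smul,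
    mul_inv_cancel₀ hq0, one_smul]
  congr 2
  exact mul_comm _ _

lemma endRel_bc : opB * opC = opC * opB := by
  rw [opB, opC, ← mulLeft_mul', ← mulLeft_mul', mul_comm]

lemma xy_single : AddMonoidAlgebra.single ((1:ℕ),(0:ℕ)) (1:ℂ)
    * AddMonoidAlgebra.single ((0:ℕ),(1:ℕ)) (1:ℂ) = AddMonoidAlgebra.single (1,1) 1 := by
  rw [AddMonoidAlgebra.single_mul_single]; norm_num

lemma opAD (q : ℂ) (hq0 : q ≠ 0) : opA q * opD q = LinearMap.mulLeft ℂ (wel q) := by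
  rw [opA, opD, ← mul_assoc]
  have h1 : (dil q).toLinearMap * (dil q⁻¹).toLinearMap = (1 : Module.End ℂ Wsp) := by
    apply LinearMap.ext; intro x
    exact dil_dil q hq0 x
  rw [h1, one_mul]

lemma opDA (q : ℂ) (hq0 : q ≠ 0) : opD q * opA q = LinearMap.mulLeft ℂ (dil q⁻¹ (wel q)) := by
  have key : LinearMap.mulLeft ℂ (wel q) * (dil q).toLinearMap
      = (dil q).toLinearMap * LinearMap.mulLeft ℂ (dil q⁻¹ (wel q)) := by
    rw [dil_mulLeft]
    congr 2
    exact (dil_dil q hq0 (wel q)).symm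
  rw [opD, opA, mul_assoc, key, ← mul_assoc]
  have h1 : (dil q⁻¹).toLinearMap * (dil q).toLinearMap = (1 : Module.End ℂ Wsp) := by
    apply LinearMap.ext; intro x
    have := dil_dil q⁻¹ (inv_ne_zero hq0) x
    rwa [inv_inv] at this
  rw [h1, one_mul]

lemma endRel_ad (q : ℂ) (hq0 : q ≠ 0) :
    opA q * opD q = opD q * opA q + (q - q⁻¹) • (opB * opC) := by
  rw [opAD q hq0, opDA q hq0, opB, opC, ← mulLeft_mul', xy_single, ← mulLeft_smul',
    ← mulLeft_add']
  congr 1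
  rw [dil_w q hq0, wel]
  module

lemma mulLeft_sub' (p p' : Wsp) :
    LinearMap.mulLeft ℂ (p - p') = LinearMap.mulLeft ℂ p - LinearMap.mulLeft ℂ p' := by
  apply LinearMap.ext; intro x; simp [sub_mul]

lemma endRel_det (q : ℂ) (hq0 : q ≠ 0) :
    opA q * opD q - q • (opB * opC) = 1 := by
  have h1 : (1 : Module.End ℂ Wsp) = LinearMap.mulLeft ℂ (1 : Wsp) := by
    rw [LinearMap.mulLeft_one]; rfl
  rw [opAD q hq0, opB, opC, ← mulLeft_mul', xy_single, ← mulLeft_smul', h1, ← mulLeft_sub']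
  congr 1
  rw [wel]
  module

end Rep
section Rep2
open AddMonoidAlgebra

noncomputable def SL2rep (q : ℂ) (hq0 : q ≠ 0) : OqSL2 q →ₐ[ℂ] Module.End ℂ Wsp :=
  RingQuot.liftAlgHom ℂ ⟨FreeAlgebra.lift ℂ ![opA q, opB, opC, opD q], by
    intro x y h
    have sset : True := trivial
    induction h with
    | ab =>
        simp only [map_mul, map_smul, FreeAlgebra.lift_ι_apply, Matrix.cons_val_zero,
          Matrix.cons_val_one, Matrix.head_cons, Matrix.cons_val_two, Matrix.tail_cons,
          Matrix.cons_val_three, Matrix.cons_val_fin_one]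
        exact endRel_ab q
    | ac =>
        simp only [map_mul, map_smul, FreeAlgebra.lift_ι_apply, Matrix.cons_val_zero,
          Matrix.cons_val_one, Matrix.head_cons, Matrix.cons_val_two, Matrix.tail_cons,
          Matrix.cons_val_three, Matrix.cons_val_fin_one]
        exact endRel_ac q
    | bd =>
        simp only [map_mul, map_smul, FreeAlgebra.lift_ι_apply, Matrix.cons_val_zero,
          Matrix.cons_val_one, Matrix.head_cons, Matrix.cons_val_two, Matrix.tail_cons,
          Matrix.cons_val_three, Matrix.cons_val_fin_one]
        exact endRel_bd q hq0
    | cd =>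
        simp only [map_mul, map_smul, FreeAlgebra.lift_ι_apply, Matrix.cons_val_zero,
          Matrix.cons_val_one, Matrix.head_cons, Matrix.cons_val_two, Matrix.tail_cons,
          Matrix.cons_val_three, Matrix.cons_val_fin_one]
        exact endRel_cd q hq0
    | bc =>
        simp only [map_mul, FreeAlgebra.lift_ι_apply, Matrix.cons_val_zero,
          Matrix.cons_val_one, Matrix.head_cons, Matrix.cons_val_two, Matrix.tail_cons,
          Matrix.cons_val_three, Matrix.cons_val_fin_one]
        exact endRel_bc
    | ad =>
        simp only [map_mul, map_add, map_smul, FreeAlgebra.lift_ι_apply, Matrix.cons_val_zero,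
          Matrix.cons_val_one, Matrix.head_cons, Matrix.cons_val_two, Matrix.tail_cons,
          Matrix.cons_val_three, Matrix.cons_val_fin_one]
        exact endRel_ad q hq0
    | det =>
        simp only [map_mul, map_sub, map_one, map_smul, FreeAlgebra.lift_ι_apply,
          Matrix.cons_val_zero, Matrix.cons_val_one, Matrix.head_cons, Matrix.cons_val_two,
          Matrix.tail_cons, Matrix.cons_val_three, Matrix.cons_val_fin_one]
        exact endRel_det q hq0⟩

lemma rep_a (q : ℂ) (hq0 : q ≠ 0) : SL2rep q hq0 (SL2a q) = opA q := by
  rw [SL2a, SL2rep, RingQuot.liftAlgHom_mkAlgHom_apply, FreeAlgebra.lift_ι_apply]; rfl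
lemma rep_b (q : ℂ) (hq0 : q ≠ 0) : SL2rep q hq0 (SL2b q) = opB := by
  rw [SL2b, SL2rep, RingQuot.liftAlgHom_mkAlgHom_apply, FreeAlgebra.lift_ι_apply]; rfl
lemma rep_c (q : ℂ) (hq0 : q ≠ 0) : SL2rep q hq0 (SL2c q) = opC := by
  rw [SL2c, SL2rep, RingQuot.liftAlgHom_mkAlgHom_apply, FreeAlgebra.lift_ι_apply]; rfl
lemma rep_d (q : ℂ) (hq0 : q ≠ 0) : SL2rep q hq0 (SL2d q) = opD q := by
  rw [SL2d, SL2rep, RingQuot.liftAlgHom_mkAlgHom_apply, FreeAlgebra.lift_ι_apply]; rfl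

lemma opBC_pow (k l : ℕ) : opB ^ k * opC ^ l
    = LinearMap.mulLeft ℂ (AddMonoidAlgebra.single ((k : ℕ), (l : ℕ)) (1 : ℂ)) := by
  rw [opB, opC, LinearMap.pow_mulLeft, LinearMap.pow_mulLeft, ← mulLeft_mul',
    AddMonoidAlgebra.single_pow, AddMonoidAlgebra.single_pow, AddMonoidAlgebra.single_mul_single]
  norm_num

end Rep2

section Eval
open AddMonoidAlgebra

lemma evalA (f : (ℕ×ℕ) →₀ ℂ) (φ : ℕ×ℕ → ℂ → ℂ) (hφ : ∀ kl, φ kl 0 = 0) (z : ℕ×ℕ) :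
    (f.sum fun kl c => φ kl c • AddMonoidAlgebra.single kl (1:ℂ)).coeff z = φ z (f z) := by
  classical
  rw [AddMonoidAlgebra.coeff_finsuppSum, Finsupp.sum_apply]
  have h1 : ∀ kl c, (φ kl c • AddMonoidAlgebra.single kl (1:ℂ)).coeff z
      = if kl = z then φ kl c else 0 := by
    intro kl c
    rw [AddMonoidAlgebra.coeff_smul, AddMonoidAlgebra.coeff_single, Finsupp.smul_apply, Finsupp.single_apply]
    split <;> simp
  simp only [h1]
  rw [Finsupp.sum_ite_eq']
  split
  · rfl
  · rename_i h
    rw [Finsupp.notMem_support_iff.mp h, hφ]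

lemma evalB (f : (ℕ×ℕ) →₀ ℂ) (φ : ℕ×ℕ → ℂ → ℂ) (hφ : ∀ kl, φ kl 0 = 0) (k l : ℕ) :
    (f.sum fun kl c => φ kl c • AddMonoidAlgebra.single (kl + ((1:ℕ),(1:ℕ))) (1:ℂ)).coeff (k+1, l+1)
      = φ (k,l) (f (k,l)) := by
  classical
  rw [AddMonoidAlgebra.coeff_finsuppSum, Finsupp.sum_apply]
  have h1 : ∀ kl c, (φ kl c • AddMonoidAlgebra.single (kl + ((1:ℕ),(1:ℕ))) (1:ℂ)).coeff ((k+1, l+1) : ℕ × ℕ)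
      = if kl = (k,l) then φ kl c else 0 := by
    intro kl c
    rw [AddMonoidAlgebra.coeff_smul, AddMonoidAlgebra.coeff_single, Finsupp.smul_apply, Finsupp.single_apply]
    have : (kl + ((1:ℕ),(1:ℕ)) = ((k+1, l+1) : ℕ × ℕ)) ↔ kl = (k,l) := by
      constructor
      · intro h
        have h1 := congrArg Prod.fst h
        have h2 := congrArg Prod.snd h
        simp only [Prod.fst_add, Prod.snd_add] at h1 h2
        exact Prod.ext (by omega) (by omega)
      · rintro rfl; rfl
    rw [if_congr this rfl rfl]
    split <;> simp
  simp only [h1]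
  rw [Finsupp.sum_ite_eq']
  split
  · rfl
  · rename_i h
    rw [Finsupp.notMem_support_iff.mp h, hφ]

lemma evalB0 (f : (ℕ×ℕ) →₀ ℂ) (φ : ℕ×ℕ → ℂ → ℂ) (z : ℕ×ℕ) (hz : z.1 = 0 ∨ z.2 = 0) :
    (f.sum fun kl c => φ kl c • AddMonoidAlgebra.single (kl + ((1:ℕ),(1:ℕ))) (1:ℂ)).coeff z = 0 := by
  classical
  rw [AddMonoidAlgebra.coeff_finsuppSum, Finsupp.sum_apply, Finsupp.sum]
  apply Finset.sum_eq_zero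
  intro kl _
  rw [AddMonoidAlgebra.coeff_smul, AddMonoidAlgebra.coeff_single, Finsupp.smul_apply, Finsupp.single_apply]
  have : ¬ (kl + ((1:ℕ),(1:ℕ)) = z) := by
    intro h
    have h1 := congrArg Prod.fst h
    have h2 := congrArg Prod.snd h
    simp only [Prod.fst_add, Prod.snd_add] at h1 h2
    rcases hz with hz | hz <;> omega
  rw [if_neg this, smul_zero]

lemma endsum_apply (f : (ℕ×ℕ) →₀ ℂ) (F : ℕ×ℕ → ℂ → Module.End ℂ Wsp) (v : Wsp) :
    (f.sum F) v = f.sum fun kl c => (F kl c) v := by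
  rw [Finsupp.sum, Finsupp.sum, LinearMap.sum_apply]

lemma opA_single (q : ℂ) (g : ℕ × ℕ) (r : ℂ) :
    opA q (AddMonoidAlgebra.single g r) = q ^ (g.1 + g.2) • AddMonoidAlgebra.single g r :=
  dil_single q g r

lemma wsp_add_apply (x y : Wsp) (z : ℕ × ℕ) : (x + y).coeff z = x.coeff z + y.coeff z := rfl

lemma wsp_zero_apply (z : ℕ × ℕ) : (0 : Wsp).coeff z = 0 := rfl

end Eval

section Part2
open AddMonoidAlgebra

private lemma one_sub_pow_ne (q : ℂ) (hq0 : q ≠ 0) (hq : ∀ m : ℕ, m ≠ 0 → q ^ m ≠ 1)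
    {m : ℕ} (hm : m ≠ 0) : (1 : ℂ) - (q⁻¹) ^ m ≠ 0 := by
  rw [inv_pow, sub_ne_zero]
  intro h
  apply hq m hm
  rw [eq_comm, inv_eq_one] at h
  exact h

lemma SL2part2 (q : ℂ) (hq0 : q ≠ 0) (hq : ∀ m : ℕ, m ≠ 0 → q ^ m ≠ 1) (f : (ℕ × ℕ) →₀ ℂ) :
    ((SL2a q + SL2d q) * SL2poly q f = SL2poly q f * (SL2a q + SL2d q)) ↔
      ∀ kl : ℕ × ℕ, kl ≠ (0, 0) → f kl = 0 := by
  constructor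
  · intro hcomm
    have hzero : SL2a q * (f.sum fun kl coef =>
          ((1 - (q⁻¹) ^ (kl.1 + kl.2)) * coef) • (SL2b q ^ kl.1 * SL2c q ^ kl.2))
        + (f.sum fun kl coef =>
          (((q⁻¹) ^ (kl.1 + kl.2) - 1) * coef) • (SL2b q ^ kl.1 * SL2c q ^ kl.2)) * SL2d q
        = 0 := by
      have h := SL2part1 q hq0 f
      simp only [zq q] at h
      rw [← h, hcomm, sub_self]
    -- push through the representation
    have hmap : ∀ (γ : ℕ×ℕ → ℂ → ℂ),
        SL2rep q hq0 (f.sum fun kl c => γ kl c • (SL2b q ^ kl.1 * SL2c q ^ kl.2))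
          = f.sum fun kl c =>
              γ kl c • LinearMap.mulLeft ℂ (AddMonoidAlgebra.single (kl.1, kl.2) (1:ℂ)) := by
      intro γ
      rw [map_finsuppSum]
      apply Finsupp.sum_congr
      intro kl _
      rw [map_smul, map_mul, map_pow, map_pow, rep_b, rep_c, opBC_pow]
    have h2 : opA q * (f.sum fun kl c =>
          ((1 - (q⁻¹) ^ (kl.1 + kl.2)) * c)
            • LinearMap.mulLeft ℂ (AddMonoidAlgebra.single (kl.1, kl.2) (1:ℂ)))
        + (f.sum fun kl c =>
          (((q⁻¹) ^ (kl.1 + kl.2) - 1) * c)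
            • LinearMap.mulLeft ℂ (AddMonoidAlgebra.single (kl.1, kl.2) (1:ℂ))) * opD q
        = 0 := by
      have := congrArg (SL2rep q hq0) hzero
      rwa [map_add, map_mul, map_mul, rep_a, rep_d, map_zero, hmap, hmap] at this
    -- evaluate at 1
    have h3 := LinearMap.congr_fun h2 (1 : Wsp)
    rw [LinearMap.add_apply, Module.End.mul_apply, Module.End.mul_apply, LinearMap.zero_apply,
      endsum_apply, endsum_apply] at h3
    -- opD at 1
    have hD1 : opD q (1 : Wsp) = AddMonoidAlgebra.single ((0:ℕ),(0:ℕ)) (1:ℂ)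
        + q⁻¹ • AddMonoidAlgebra.single (1,1) 1 := by
      rw [opD, Module.End.mul_apply, LinearMap.mulLeft_apply, mul_one,
        AlgHom.toLinearMap_apply, dil_w q hq0, AddMonoidAlgebra.one_def]
      rfl
    simp only [LinearMap.smul_apply, LinearMap.mulLeft_apply, mul_one, hD1] at h3
    -- normalize the two sums
    have hsum1 : (f.sum fun kl c => ((1 - (q⁻¹) ^ (kl.1 + kl.2)) * c)
          • AddMonoidAlgebra.single (kl.1, kl.2) (1:ℂ)) = (fun p => p) (f.sum fun kl c =>
          ((1 - (q⁻¹) ^ (kl.1 + kl.2)) * c) • AddMonoidAlgebra.single (kl.1, kl.2) (1:ℂ)) := rfl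
    rw [map_finsuppSum (opA q)] at h3
    have heq1 : (f.sum fun kl c => opA q (((1 - (q⁻¹) ^ (kl.1 + kl.2)) * c)
          • AddMonoidAlgebra.single (kl.1, kl.2) (1:ℂ)))
        = f.sum fun kl c => (q ^ (kl.1 + kl.2) * ((1 - (q⁻¹) ^ (kl.1 + kl.2)) * c))
          • AddMonoidAlgebra.single kl (1:ℂ) := by
      apply Finsupp.sum_congr
      intro kl _
      rw [map_smul, opA_single, smul_smul, Prod.mk.eta]
      congr 1
      ring
    have heq2 : (f.sum fun kl c => (((q⁻¹) ^ (kl.1 + kl.2) - 1) * c)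
          • (AddMonoidAlgebra.single (kl.1, kl.2) (1:ℂ)
            * (AddMonoidAlgebra.single ((0:ℕ),(0:ℕ)) (1:ℂ)
              + q⁻¹ • AddMonoidAlgebra.single (1,1) 1)))
        = (f.sum fun kl c => ((((q⁻¹) ^ (kl.1 + kl.2) - 1)) * c)
            • AddMonoidAlgebra.single kl (1:ℂ))
          + (f.sum fun kl c => ((((q⁻¹) ^ (kl.1 + kl.2) - 1) * c) * q⁻¹)
            • AddMonoidAlgebra.single (kl + ((1:ℕ),(1:ℕ))) (1:ℂ)) := by
      have hidx0 : ∀ kl : ℕ×ℕ, ((kl.1, kl.2) : ℕ×ℕ) + ((0:ℕ),(0:ℕ)) = kl := by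
        intro kl
        ext <;> simp
      have hidx1 : ∀ kl : ℕ×ℕ, ((kl.1, kl.2) : ℕ×ℕ) + ((1:ℕ),(1:ℕ)) = kl + ((1:ℕ),(1:ℕ)) := by
        intro kl
        rw [Prod.mk.eta]
      rw [Finsupp.sum, Finsupp.sum, Finsupp.sum, ← Finset.sum_add_distrib]
      apply Finset.sum_congr rfl
      intro kl _
      rw [mul_add, AddMonoidAlgebra.single_mul_single, mul_smul_comm,
        AddMonoidAlgebra.single_mul_single, smul_add, smul_smul, mul_one, hidx0, hidx1]
    rw [heq1, heq2] at h3
    -- coefficientwise consequences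
    set g : ℕ×ℕ → ℂ := fun kl => (1 - (q⁻¹) ^ (kl.1 + kl.2)) * f kl with hg
    have key : ∀ z : ℕ×ℕ,
        q ^ (z.1 + z.2) * g z + ((q⁻¹) ^ (z.1 + z.2) - 1) * f z
          + ((f.sum fun kl c => ((((q⁻¹) ^ (kl.1 + kl.2) - 1) * c) * q⁻¹)
            • AddMonoidAlgebra.single (kl + ((1:ℕ),(1:ℕ))) (1:ℂ)) : Wsp).coeff z = 0 := by
      intro z
      have hz := congrArg (fun p : Wsp => p.coeff z) h3
      simp only [wsp_add_apply, wsp_zero_apply] at hz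
      rw [evalA f _ (by intro kl; ring) z, evalA f _ (by intro kl; ring) z] at hz
      simp only [hg]
      linear_combination hz
    have key1 : ∀ z : ℕ×ℕ, z.1 = 0 ∨ z.2 = 0 →
        (q ^ (z.1 + z.2) - 1) * g z = 0 := by
      intro z hkz
      have h := key z
      rw [evalB0 f _ z hkz] at h
      simp only [hg] at h ⊢
      linear_combination h
    have key2 : ∀ k l : ℕ,
        (q ^ ((k+1) + (l+1)) - 1) * g (k+1, l+1)
          + (((q⁻¹) ^ (k + l) - 1) * f (k, l)) * q⁻¹ = 0 := by
      intro k l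
      have h := key (k+1, l+1)
      rw [evalB f _ (by intro kl; ring) k l] at h
      simp only [hg] at h ⊢
      linear_combination h
    -- induction: g vanishes everywhere off (0,0), in fact g ≡ 0
    have hqm : ∀ m : ℕ, m ≠ 0 → q ^ m - 1 ≠ 0 := by
      intro m hm
      rw [sub_ne_zero]
      exact hq m hm
    have hgzero : ∀ k l : ℕ, g (k, l) = 0 := by
      intro k
      induction k with
      | zero =>
          intro l
          cases l with
          | zero => rw [hg]; simp
          | succ n =>
              have h := key1 (0, n+1) (Or.inl rfl)
              have hne : q ^ ((0:ℕ) + (n+1)) - 1 ≠ 0 := hqm _ (by omega)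
              exact (mul_eq_zero.mp h).resolve_left hne
      | succ k ih =>
          intro l
          cases l with
          | zero =>
              have h := key1 (k+1, 0) (Or.inr rfl)
              have hne : q ^ ((k+1) + (0:ℕ)) - 1 ≠ 0 := hqm _ (by omega)
              exact (mul_eq_zero.mp h).resolve_left hne
          | succ n =>
              have h := key2 k n
              have hprev : ((q⁻¹) ^ (k + n) - 1) * f (k, n) = -g (k, n) := by rw [hg]; ring
              rw [hprev, ih n, neg_zero, zero_mul, add_zero] at h
              have hne : q ^ ((k+1) + (n+1)) - 1 ≠ 0 := hqm _ (by omega)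
              exact (mul_eq_zero.mp h).resolve_left hne
    intro kl hkl
    obtain ⟨k, l⟩ := kl
    have hm : k + l ≠ 0 := by
      intro h
      exact hkl (Prod.ext (by omega) (by omega))
    have := hgzero k l
    rw [hg] at this
    exact (mul_eq_zero.mp this).resolve_left (one_sub_pow_ne q hq0 hq hm)
  · intro hf
    have h := SL2part1 q hq0 f
    have e1 : (f.sum fun kl coef =>
        ((1 - q ^ (-((kl.1 : ℤ) + kl.2))) * coef) • (SL2b q ^ kl.1 * SL2c q ^ kl.2)) = 0 := by
      rw [Finsupp.sum]
      apply Finset.sum_eq_zero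
      intro kl _
      by_cases hz : kl = (0,0)
      · subst hz; simp
      · rw [hf kl hz]; simp
    have e2 : (f.sum fun kl coef =>
        ((q ^ (-((kl.1 : ℤ) + kl.2)) - 1) * coef) • (SL2b q ^ kl.1 * SL2c q ^ kl.2)) = 0 := by
      rw [Finsupp.sum]
      apply Finset.sum_eq_zero
      intro kl _
      by_cases hz : kl = (0,0)
      · subst hz; simp
      · rw [hf kl hz]; simp
    rw [e1, e2, mul_zero, zero_mul, add_zero] at h
    exact sub_eq_zero.mp h

end Part2

/-- In `O_q(SL_2(ℂ))`, for any polynomial `p ∈ ℂ[b,c]` with homogeneous components `p_m`,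
`[a + d, p(b,c)] = a·Σ_m (1 − q^{−m}) p_m(b,c) + Σ_m (q^{−m} − 1) p_m(b,c)·d`.
In particular, if `q` is not a root of unity, `p(b,c)` commutes with `a + d` iff `p` is
constant. -/
theorem commutator_trace_with_polynomial_bc (q : ℂ) (hq0 : q ≠ 0)
    (f : (ℕ × ℕ) →₀ ℂ) :
    let a := SL2a q; let b := SL2b q; let c := SL2c q; let d := SL2d q
    ((a + d) * SL2poly q f - SL2poly q f * (a + d) =
      a * (f.sum fun kl coef =>
            ((1 - q ^ (-((kl.1 : ℤ) + kl.2))) * coef) • (b ^ kl.1 * c ^ kl.2))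
        + (f.sum fun kl coef =>
            ((q ^ (-((kl.1 : ℤ) + kl.2)) - 1) * coef) • (b ^ kl.1 * c ^ kl.2)) * d) ∧
    ((∀ m : ℕ, m ≠ 0 → q ^ m ≠ 1) →
      ((a + d) * SL2poly q f = SL2poly q f * (a + d) ↔
        ∀ kl : ℕ × ℕ, kl ≠ (0, 0) → f kl = 0)) := by
  intro a b c d
  exact ⟨SL2part1 q hq0 f, fun hq => SL2part2 q hq0 hq f⟩
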